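/- Let P be the Petersen graph and let 𝓜 be a multiset of k perfect matchings of P. Let P^𝓜 be the multigraph obtained from P by adding, for each matching in 𝓜, a parallel copy of each of its edges. If 𝓜' is a multiset of k+1 pairwise edge-disjoint perfect matchings of P^𝓜, then (as a multiset of perfect matchings of P, via projection) 𝓜 is a sub-multiset of 𝓜'. -/

import Mathlib

/-- The vertex type of the Petersen graph, realized as the Kneser graph K(5,2). -/
abbrev PetersenV : Type := {s : Finset (Fin 5) // s.card = 2}

/-- The Petersen graph as the Kneser graph K(5,2). -/
def petersen : SimpleGraph PetersenV where
  Adj a b := Disjoint a.1 b.1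
  symm := ⟨fun _ _ h => h.symm⟩
  loopless := ⟨by
    intro a h
    have h0 : a.1 = ⊥ := disjoint_self.mp h
    have h2 := a.2
    rw [h0] at h2
    simp at h2⟩

instance : DecidableRel petersen.Adj :=
  fun a b => inferInstanceAs (Decidable (Disjoint a.1 b.1))

/-- Perfect matching of the (simple) Petersen graph, as a finite edge set. -/
def IsPM (m : Finset (Sym2 PetersenV)) : Prop :=
  (↑m ⊆ petersen.edgeSet) ∧ ∀ v : PetersenV, ∃! e, e ∈ m ∧ v ∈ e

/-- `m` is a perfect matching of the multigraph whose edge multiset is `E`: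
a sub-multiset of `E` in which every vertex lies in exactly one edge
(counted with multiplicity). -/
def IsPMOf (E m : Multiset (Sym2 PetersenV)) : Prop :=
  m ≤ E ∧ ∀ v : PetersenV, (m.filter (fun e => v ∈ e)).card = 1

def pv (a b : Fin 5) (h : ({a,b} : Finset (Fin 5)).card = 2 := by decide) : PetersenV := ⟨{a,b}, h⟩
def PM1 : Finset (Sym2 PetersenV) := {s(pv 0 1, pv 2 3), s(pv 0 2, pv 1 4), s(pv 0 3, pv 2 4), s(pv 0 4, pv 1 3), s(pv 1 2, pv 3 4)}
def PM2 : Finset (Sym2 PetersenV) := {s(pv 0 1, pv 2 3), s(pv 0 2, pv 3 4), s(pv 0 3, pv 1 4), s(pv 0 4, pv 1 2), s(pv 1 3, pv 2 4)}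
def PM3 : Finset (Sym2 PetersenV) := {s(pv 0 1, pv 2 4), s(pv 0 2, pv 1 3), s(pv 0 3, pv 1 4), s(pv 0 4, pv 2 3), s(pv 1 2, pv 3 4)}
def PM4 : Finset (Sym2 PetersenV) := {s(pv 0 1, pv 2 4), s(pv 0 2, pv 3 4), s(pv 0 3, pv 1 2), s(pv 0 4, pv 1 3), s(pv 1 4, pv 2 3)}
def PM5 : Finset (Sym2 PetersenV) := {s(pv 0 1, pv 3 4), s(pv 0 2, pv 1 3), s(pv 0 3, pv 2 4), s(pv 0 4, pv 1 2), s(pv 1 4, pv 2 3)}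
def PM6 : Finset (Sym2 PetersenV) := {s(pv 0 1, pv 3 4), s(pv 0 2, pv 1 4), s(pv 0 3, pv 1 2), s(pv 0 4, pv 2 3), s(pv 1 3, pv 2 4)}

def pms6 : Finset (Finset (Sym2 PetersenV)) := {PM1, PM2, PM3, PM4, PM5, PM6}

lemma mem_pms6_iff (M : Finset (Sym2 PetersenV)) :
    M ∈ pms6 ↔ M = PM1 ∨ M = PM2 ∨ M = PM3 ∨ M = PM4 ∨ M = PM5 ∨ M = PM6 := by
  simp [pms6]

lemma pms6_card : pms6.card = 6 := by decide

lemma edge_at {m : Finset (Sym2 PetersenV)} (hm : IsPM m) (v : PetersenV) :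
    ∃ w, petersen.Adj v w ∧ s(v,w) ∈ m ∧ ∀ e ∈ m, v ∈ e → e = s(v,w) := by
  obtain ⟨e, ⟨hem, hve⟩, hu⟩ := hm.2 v
  have hes : e ∈ petersen.edgeSet := hm.1 hem
  induction e with
  | _ a b =>
    rcases Sym2.mem_iff.mp hve with rfl | rfl
    · exact ⟨b, hes, hem, fun f hf hvf => hu f ⟨hf, hvf⟩⟩
    · have hadj : petersen.Adj a v := hes
      have h2 : s(a, v) = s(v, a) := Sym2.eq_swap
      rw [h2] at hem
      exact ⟨a, hadj.symm, hem, fun f hf hvf => (hu f ⟨hf, hvf⟩).trans h2⟩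

lemma conflict {m : Finset (Sym2 PetersenV)} (hm : IsPM m) {e f : Sym2 PetersenV} (v : PetersenV)
    (he : e ∈ m) (hf : f ∈ m) (hve : v ∈ e) (hvf : v ∈ f) (hne : e ≠ f) : False := by
  obtain ⟨g, -, hu⟩ := hm.2 v
  exact hne ((hu e ⟨he, hve⟩).trans (hu f ⟨hf, hvf⟩).symm)

lemma nbr01 : ∀ w : PetersenV, petersen.Adj (pv 0 1) w → w = pv 2 3 ∨ w = pv 2 4 ∨ w = pv 3 4 := by decide
lemma nbr02 : ∀ w : PetersenV, petersen.Adj (pv 0 2) w → w = pv 1 3 ∨ w = pv 1 4 ∨ w = pv 3 4 := by decide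
lemma nbr03 : ∀ w : PetersenV, petersen.Adj (pv 0 3) w → w = pv 1 2 ∨ w = pv 1 4 ∨ w = pv 2 4 := by decide
lemma nbr04 : ∀ w : PetersenV, petersen.Adj (pv 0 4) w → w = pv 1 2 ∨ w = pv 1 3 ∨ w = pv 2 3 := by decide
lemma nbr12 : ∀ w : PetersenV, petersen.Adj (pv 1 2) w → w = pv 0 3 ∨ w = pv 0 4 ∨ w = pv 3 4 := by decide
lemma nbr13 : ∀ w : PetersenV, petersen.Adj (pv 1 3) w → w = pv 0 2 ∨ w = pv 0 4 ∨ w = pv 2 4 := by decide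
lemma nbr14 : ∀ w : PetersenV, petersen.Adj (pv 1 4) w → w = pv 0 2 ∨ w = pv 0 3 ∨ w = pv 2 3 := by decide
lemma nbr23 : ∀ w : PetersenV, petersen.Adj (pv 2 3) w → w = pv 0 1 ∨ w = pv 0 4 ∨ w = pv 1 4 := by decide
lemma nbr24 : ∀ w : PetersenV, petersen.Adj (pv 2 4) w → w = pv 0 1 ∨ w = pv 0 3 ∨ w = pv 1 3 := by decide
lemma nbr34 : ∀ w : PetersenV, petersen.Adj (pv 3 4) w → w = pv 0 1 ∨ w = pv 0 2 ∨ w = pv 1 2 := by decide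

lemma classification {m : Finset (Sym2 PetersenV)} (hm : IsPM m) : m ∈ pms6 := by
  obtain ⟨w, hadj1, hmem1, -⟩ := edge_at hm (pv 0 1)
  rcases nbr01 w hadj1 with rfl | rfl | rfl
  · -- edge s(pv 0 1, pv 2 3)
    obtain ⟨w, hadj2, hmem2, -⟩ := edge_at hm (pv 0 2)
    rcases nbr02 w hadj2 with rfl | rfl | rfl
    · -- edge s(pv 0 2, pv 1 3)
      obtain ⟨w, hadj3, hmem3, -⟩ := edge_at hm (pv 0 3)
      rcases nbr03 w hadj3 with rfl | rfl | rfl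
      · -- edge s(pv 0 3, pv 1 2)
        obtain ⟨w, hadj4, hmem4, -⟩ := edge_at hm (pv 0 4)
        rcases nbr04 w hadj4 with rfl | rfl | rfl
        · exact (conflict hm (pv 1 2) hmem4 hmem3 (by decide) (by decide) (by decide)).elim
        · exact (conflict hm (pv 1 3) hmem4 hmem2 (by decide) (by decide) (by decide)).elim
        · exact (conflict hm (pv 2 3) hmem4 hmem1 (by decide) (by decide) (by decide)).elim
      · -- edge s(pv 0 3, pv 1 4)
        obtain ⟨w, hadj5, hmem5, -⟩ := edge_at hm (pv 0 4)
        rcases nbr04 w hadj5 with rfl | rfl | rfl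
        · -- edge s(pv 0 4, pv 1 2)
          obtain ⟨w, hadj6, hmem6, -⟩ := edge_at hm (pv 2 4)
          rcases nbr24 w hadj6 with rfl | rfl | rfl
          · exact (conflict hm (pv 0 1) hmem6 hmem1 (by decide) (by decide) (by decide)).elim
          · exact (conflict hm (pv 0 3) hmem6 hmem3 (by decide) (by decide) (by decide)).elim
          · exact (conflict hm (pv 1 3) hmem6 hmem2 (by decide) (by decide) (by decide)).elim
        · exact (conflict hm (pv 1 3) hmem5 hmem2 (by decide) (by decide) (by decide)).elim
        · exact (conflict hm (pv 2 3) hmem5 hmem1 (by decide) (by decide) (by decide)).elim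
      · -- edge s(pv 0 3, pv 2 4)
        obtain ⟨w, hadj7, hmem7, -⟩ := edge_at hm (pv 0 4)
        rcases nbr04 w hadj7 with rfl | rfl | rfl
        · -- edge s(pv 0 4, pv 1 2)
          obtain ⟨w, hadj8, hmem8, -⟩ := edge_at hm (pv 1 4)
          rcases nbr14 w hadj8 with rfl | rfl | rfl
          · exact (conflict hm (pv 0 2) hmem8 hmem2 (by decide) (by decide) (by decide)).elim
          · exact (conflict hm (pv 0 3) hmem8 hmem3 (by decide) (by decide) (by decide)).elim
          · exact (conflict hm (pv 2 3) hmem8 hmem1 (by decide) (by decide) (by decide)).elim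
        · exact (conflict hm (pv 1 3) hmem7 hmem2 (by decide) (by decide) (by decide)).elim
        · exact (conflict hm (pv 2 3) hmem7 hmem1 (by decide) (by decide) (by decide)).elim
    · -- edge s(pv 0 2, pv 1 4)
      obtain ⟨w, hadj9, hmem9, -⟩ := edge_at hm (pv 0 3)
      rcases nbr03 w hadj9 with rfl | rfl | rfl
      · -- edge s(pv 0 3, pv 1 2)
        obtain ⟨w, hadj10, hmem10, -⟩ := edge_at hm (pv 0 4)
        rcases nbr04 w hadj10 with rfl | rfl | rfl
        · exact (conflict hm (pv 1 2) hmem10 hmem9 (by decide) (by decide) (by decide)).elim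
        · -- edge s(pv 0 4, pv 1 3)
          obtain ⟨w, hadj11, hmem11, -⟩ := edge_at hm (pv 2 4)
          rcases nbr24 w hadj11 with rfl | rfl | rfl
          · exact (conflict hm (pv 0 1) hmem11 hmem1 (by decide) (by decide) (by decide)).elim
          · exact (conflict hm (pv 0 3) hmem11 hmem9 (by decide) (by decide) (by decide)).elim
          · exact (conflict hm (pv 1 3) hmem11 hmem10 (by decide) (by decide) (by decide)).elim
        · exact (conflict hm (pv 2 3) hmem10 hmem1 (by decide) (by decide) (by decide)).elim
      · exact (conflict hm (pv 1 4) hmem9 hmem2 (by decide) (by decide) (by decide)).elim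
      · -- edge s(pv 0 3, pv 2 4)
        obtain ⟨w, hadj12, hmem12, -⟩ := edge_at hm (pv 0 4)
        rcases nbr04 w hadj12 with rfl | rfl | rfl
        · -- edge s(pv 0 4, pv 1 2)
          obtain ⟨w, hadj13, hmem13, -⟩ := edge_at hm (pv 1 3)
          rcases nbr13 w hadj13 with rfl | rfl | rfl
          · exact (conflict hm (pv 0 2) hmem13 hmem2 (by decide) (by decide) (by decide)).elim
          · exact (conflict hm (pv 0 4) hmem13 hmem12 (by decide) (by decide) (by decide)).elim
          · exact (conflict hm (pv 2 4) hmem13 hmem9 (by decide) (by decide) (by decide)).elim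
        · -- edge s(pv 0 4, pv 1 3)
          obtain ⟨w, hadj14, hmem14, -⟩ := edge_at hm (pv 1 2)
          rcases nbr12 w hadj14 with rfl | rfl | rfl
          · exact (conflict hm (pv 0 3) hmem14 hmem9 (by decide) (by decide) (by decide)).elim
          · exact (conflict hm (pv 0 4) hmem14 hmem12 (by decide) (by decide) (by decide)).elim
          · -- edge s(pv 1 2, pv 3 4)
            -- leaf PM1
            have hsub : ∀ x ∈ PM1, x ∈ m := by
              intro x hx
              simp only [PM1, Finset.mem_insert, Finset.mem_singleton] at hx
              rcases hx with rfl|rfl|rfl|rfl|rfl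
              exacts [hmem1, hmem2, hmem9, hmem12, hmem14]
            have hcov : ∀ a : PetersenV, ∃ e' ∈ PM1, a ∈ e' := by decide
            have hsup : m ⊆ PM1 := by
              intro e
              induction e with
              | _ a b =>
                intro he
                obtain ⟨e', he', hae'⟩ := hcov a
                obtain ⟨g, -, hu⟩ := hm.2 a
                have q1 := hu _ ⟨he, Sym2.mem_mk_left a b⟩
                have q2 := hu _ ⟨hsub e' he', hae'⟩
                rw [q1.trans q2.symm]; exact he'
            have : m = PM1 := Finset.Subset.antisymm hsup (fun x hx => hsub x hx)
            rw [this, mem_pms6_iff]; tauto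
        · exact (conflict hm (pv 2 3) hmem12 hmem1 (by decide) (by decide) (by decide)).elim
    · -- edge s(pv 0 2, pv 3 4)
      obtain ⟨w, hadj15, hmem15, -⟩ := edge_at hm (pv 0 3)
      rcases nbr03 w hadj15 with rfl | rfl | rfl
      · -- edge s(pv 0 3, pv 1 2)
        obtain ⟨w, hadj16, hmem16, -⟩ := edge_at hm (pv 0 4)
        rcases nbr04 w hadj16 with rfl | rfl | rfl
        · exact (conflict hm (pv 1 2) hmem16 hmem15 (by decide) (by decide) (by decide)).elim
        · -- edge s(pv 0 4, pv 1 3)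
          obtain ⟨w, hadj17, hmem17, -⟩ := edge_at hm (pv 1 4)
          rcases nbr14 w hadj17 with rfl | rfl | rfl
          · exact (conflict hm (pv 0 2) hmem17 hmem2 (by decide) (by decide) (by decide)).elim
          · exact (conflict hm (pv 0 3) hmem17 hmem15 (by decide) (by decide) (by decide)).elim
          · exact (conflict hm (pv 2 3) hmem17 hmem1 (by decide) (by decide) (by decide)).elim
        · exact (conflict hm (pv 2 3) hmem16 hmem1 (by decide) (by decide) (by decide)).elim
      · -- edge s(pv 0 3, pv 1 4)
        obtain ⟨w, hadj18, hmem18, -⟩ := edge_at hm (pv 0 4)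
        rcases nbr04 w hadj18 with rfl | rfl | rfl
        · -- edge s(pv 0 4, pv 1 2)
          obtain ⟨w, hadj19, hmem19, -⟩ := edge_at hm (pv 1 3)
          rcases nbr13 w hadj19 with rfl | rfl | rfl
          · exact (conflict hm (pv 0 2) hmem19 hmem2 (by decide) (by decide) (by decide)).elim
          · exact (conflict hm (pv 0 4) hmem19 hmem18 (by decide) (by decide) (by decide)).elim
          · -- edge s(pv 1 3, pv 2 4)
            -- leaf PM2
            have hsub : ∀ x ∈ PM2, x ∈ m := by
              intro x hx
              simp only [PM2, Finset.mem_insert, Finset.mem_singleton] at hx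
              rcases hx with rfl|rfl|rfl|rfl|rfl
              exacts [hmem1, hmem2, hmem15, hmem18, hmem19]
            have hcov : ∀ a : PetersenV, ∃ e' ∈ PM2, a ∈ e' := by decide
            have hsup : m ⊆ PM2 := by
              intro e
              induction e with
              | _ a b =>
                intro he
                obtain ⟨e', he', hae'⟩ := hcov a
                obtain ⟨g, -, hu⟩ := hm.2 a
                have q1 := hu _ ⟨he, Sym2.mem_mk_left a b⟩
                have q2 := hu _ ⟨hsub e' he', hae'⟩
                rw [q1.trans q2.symm]; exact he'
            have : m = PM2 := Finset.Subset.antisymm hsup (fun x hx => hsub x hx)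
            rw [this, mem_pms6_iff]; tauto
        · -- edge s(pv 0 4, pv 1 3)
          obtain ⟨w, hadj20, hmem20, -⟩ := edge_at hm (pv 1 2)
          rcases nbr12 w hadj20 with rfl | rfl | rfl
          · exact (conflict hm (pv 0 3) hmem20 hmem15 (by decide) (by decide) (by decide)).elim
          · exact (conflict hm (pv 0 4) hmem20 hmem18 (by decide) (by decide) (by decide)).elim
          · exact (conflict hm (pv 3 4) hmem20 hmem2 (by decide) (by decide) (by decide)).elim
        · exact (conflict hm (pv 2 3) hmem18 hmem1 (by decide) (by decide) (by decide)).elim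
      · -- edge s(pv 0 3, pv 2 4)
        obtain ⟨w, hadj21, hmem21, -⟩ := edge_at hm (pv 0 4)
        rcases nbr04 w hadj21 with rfl | rfl | rfl
        · -- edge s(pv 0 4, pv 1 2)
          obtain ⟨w, hadj22, hmem22, -⟩ := edge_at hm (pv 1 3)
          rcases nbr13 w hadj22 with rfl | rfl | rfl
          · exact (conflict hm (pv 0 2) hmem22 hmem2 (by decide) (by decide) (by decide)).elim
          · exact (conflict hm (pv 0 4) hmem22 hmem21 (by decide) (by decide) (by decide)).elim
          · exact (conflict hm (pv 2 4) hmem22 hmem15 (by decide) (by decide) (by decide)).elim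
        · -- edge s(pv 0 4, pv 1 3)
          obtain ⟨w, hadj23, hmem23, -⟩ := edge_at hm (pv 1 2)
          rcases nbr12 w hadj23 with rfl | rfl | rfl
          · exact (conflict hm (pv 0 3) hmem23 hmem15 (by decide) (by decide) (by decide)).elim
          · exact (conflict hm (pv 0 4) hmem23 hmem21 (by decide) (by decide) (by decide)).elim
          · exact (conflict hm (pv 3 4) hmem23 hmem2 (by decide) (by decide) (by decide)).elim
        · exact (conflict hm (pv 2 3) hmem21 hmem1 (by decide) (by decide) (by decide)).elim
  · -- edge s(pv 0 1, pv 2 4)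
    obtain ⟨w, hadj24, hmem24, -⟩ := edge_at hm (pv 0 2)
    rcases nbr02 w hadj24 with rfl | rfl | rfl
    · -- edge s(pv 0 2, pv 1 3)
      obtain ⟨w, hadj25, hmem25, -⟩ := edge_at hm (pv 0 3)
      rcases nbr03 w hadj25 with rfl | rfl | rfl
      · -- edge s(pv 0 3, pv 1 2)
        obtain ⟨w, hadj26, hmem26, -⟩ := edge_at hm (pv 0 4)
        rcases nbr04 w hadj26 with rfl | rfl | rfl
        · exact (conflict hm (pv 1 2) hmem26 hmem25 (by decide) (by decide) (by decide)).elim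
        · exact (conflict hm (pv 1 3) hmem26 hmem24 (by decide) (by decide) (by decide)).elim
        · -- edge s(pv 0 4, pv 2 3)
          obtain ⟨w, hadj27, hmem27, -⟩ := edge_at hm (pv 1 4)
          rcases nbr14 w hadj27 with rfl | rfl | rfl
          · exact (conflict hm (pv 0 2) hmem27 hmem24 (by decide) (by decide) (by decide)).elim
          · exact (conflict hm (pv 0 3) hmem27 hmem25 (by decide) (by decide) (by decide)).elim
          · exact (conflict hm (pv 2 3) hmem27 hmem26 (by decide) (by decide) (by decide)).elim
      · -- edge s(pv 0 3, pv 1 4)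
        obtain ⟨w, hadj28, hmem28, -⟩ := edge_at hm (pv 0 4)
        rcases nbr04 w hadj28 with rfl | rfl | rfl
        · -- edge s(pv 0 4, pv 1 2)
          obtain ⟨w, hadj29, hmem29, -⟩ := edge_at hm (pv 2 3)
          rcases nbr23 w hadj29 with rfl | rfl | rfl
          · exact (conflict hm (pv 0 1) hmem29 hmem1 (by decide) (by decide) (by decide)).elim
          · exact (conflict hm (pv 0 4) hmem29 hmem28 (by decide) (by decide) (by decide)).elim
          · exact (conflict hm (pv 1 4) hmem29 hmem25 (by decide) (by decide) (by decide)).elim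
        · exact (conflict hm (pv 1 3) hmem28 hmem24 (by decide) (by decide) (by decide)).elim
        · -- edge s(pv 0 4, pv 2 3)
          obtain ⟨w, hadj30, hmem30, -⟩ := edge_at hm (pv 1 2)
          rcases nbr12 w hadj30 with rfl | rfl | rfl
          · exact (conflict hm (pv 0 3) hmem30 hmem25 (by decide) (by decide) (by decide)).elim
          · exact (conflict hm (pv 0 4) hmem30 hmem28 (by decide) (by decide) (by decide)).elim
          · -- edge s(pv 1 2, pv 3 4)
            -- leaf PM3
            have hsub : ∀ x ∈ PM3, x ∈ m := by
              intro x hx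
              simp only [PM3, Finset.mem_insert, Finset.mem_singleton] at hx
              rcases hx with rfl|rfl|rfl|rfl|rfl
              exacts [hmem1, hmem24, hmem25, hmem28, hmem30]
            have hcov : ∀ a : PetersenV, ∃ e' ∈ PM3, a ∈ e' := by decide
            have hsup : m ⊆ PM3 := by
              intro e
              induction e with
              | _ a b =>
                intro he
                obtain ⟨e', he', hae'⟩ := hcov a
                obtain ⟨g, -, hu⟩ := hm.2 a
                have q1 := hu _ ⟨he, Sym2.mem_mk_left a b⟩
                have q2 := hu _ ⟨hsub e' he', hae'⟩
                rw [q1.trans q2.symm]; exact he'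
            have : m = PM3 := Finset.Subset.antisymm hsup (fun x hx => hsub x hx)
            rw [this, mem_pms6_iff]; tauto
      · exact (conflict hm (pv 2 4) hmem25 hmem1 (by decide) (by decide) (by decide)).elim
    · -- edge s(pv 0 2, pv 1 4)
      obtain ⟨w, hadj31, hmem31, -⟩ := edge_at hm (pv 0 3)
      rcases nbr03 w hadj31 with rfl | rfl | rfl
      · -- edge s(pv 0 3, pv 1 2)
        obtain ⟨w, hadj32, hmem32, -⟩ := edge_at hm (pv 0 4)
        rcases nbr04 w hadj32 with rfl | rfl | rfl
        · exact (conflict hm (pv 1 2) hmem32 hmem31 (by decide) (by decide) (by decide)).elim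
        · -- edge s(pv 0 4, pv 1 3)
          obtain ⟨w, hadj33, hmem33, -⟩ := edge_at hm (pv 2 3)
          rcases nbr23 w hadj33 with rfl | rfl | rfl
          · exact (conflict hm (pv 0 1) hmem33 hmem1 (by decide) (by decide) (by decide)).elim
          · exact (conflict hm (pv 0 4) hmem33 hmem32 (by decide) (by decide) (by decide)).elim
          · exact (conflict hm (pv 1 4) hmem33 hmem24 (by decide) (by decide) (by decide)).elim
        · -- edge s(pv 0 4, pv 2 3)
          obtain ⟨w, hadj34, hmem34, -⟩ := edge_at hm (pv 1 3)
          rcases nbr13 w hadj34 with rfl | rfl | rfl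
          · exact (conflict hm (pv 0 2) hmem34 hmem24 (by decide) (by decide) (by decide)).elim
          · exact (conflict hm (pv 0 4) hmem34 hmem32 (by decide) (by decide) (by decide)).elim
          · exact (conflict hm (pv 2 4) hmem34 hmem1 (by decide) (by decide) (by decide)).elim
      · exact (conflict hm (pv 1 4) hmem31 hmem24 (by decide) (by decide) (by decide)).elim
      · exact (conflict hm (pv 2 4) hmem31 hmem1 (by decide) (by decide) (by decide)).elim
    · -- edge s(pv 0 2, pv 3 4)
      obtain ⟨w, hadj35, hmem35, -⟩ := edge_at hm (pv 0 3)
      rcases nbr03 w hadj35 with rfl | rfl | rfl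
      · -- edge s(pv 0 3, pv 1 2)
        obtain ⟨w, hadj36, hmem36, -⟩ := edge_at hm (pv 0 4)
        rcases nbr04 w hadj36 with rfl | rfl | rfl
        · exact (conflict hm (pv 1 2) hmem36 hmem35 (by decide) (by decide) (by decide)).elim
        · -- edge s(pv 0 4, pv 1 3)
          obtain ⟨w, hadj37, hmem37, -⟩ := edge_at hm (pv 1 4)
          rcases nbr14 w hadj37 with rfl | rfl | rfl
          · exact (conflict hm (pv 0 2) hmem37 hmem24 (by decide) (by decide) (by decide)).elim
          · exact (conflict hm (pv 0 3) hmem37 hmem35 (by decide) (by decide) (by decide)).elim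
          · -- edge s(pv 1 4, pv 2 3)
            -- leaf PM4
            have hsub : ∀ x ∈ PM4, x ∈ m := by
              intro x hx
              simp only [PM4, Finset.mem_insert, Finset.mem_singleton] at hx
              rcases hx with rfl|rfl|rfl|rfl|rfl
              exacts [hmem1, hmem24, hmem35, hmem36, hmem37]
            have hcov : ∀ a : PetersenV, ∃ e' ∈ PM4, a ∈ e' := by decide
            have hsup : m ⊆ PM4 := by
              intro e
              induction e with
              | _ a b =>
                intro he
                obtain ⟨e', he', hae'⟩ := hcov a
                obtain ⟨g, -, hu⟩ := hm.2 a
                have q1 := hu _ ⟨he, Sym2.mem_mk_left a b⟩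
                have q2 := hu _ ⟨hsub e' he', hae'⟩
                rw [q1.trans q2.symm]; exact he'
            have : m = PM4 := Finset.Subset.antisymm hsup (fun x hx => hsub x hx)
            rw [this, mem_pms6_iff]; tauto
        · -- edge s(pv 0 4, pv 2 3)
          obtain ⟨w, hadj38, hmem38, -⟩ := edge_at hm (pv 1 3)
          rcases nbr13 w hadj38 with rfl | rfl | rfl
          · exact (conflict hm (pv 0 2) hmem38 hmem24 (by decide) (by decide) (by decide)).elim
          · exact (conflict hm (pv 0 4) hmem38 hmem36 (by decide) (by decide) (by decide)).elim
          · exact (conflict hm (pv 2 4) hmem38 hmem1 (by decide) (by decide) (by decide)).elim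
      · -- edge s(pv 0 3, pv 1 4)
        obtain ⟨w, hadj39, hmem39, -⟩ := edge_at hm (pv 0 4)
        rcases nbr04 w hadj39 with rfl | rfl | rfl
        · -- edge s(pv 0 4, pv 1 2)
          obtain ⟨w, hadj40, hmem40, -⟩ := edge_at hm (pv 1 3)
          rcases nbr13 w hadj40 with rfl | rfl | rfl
          · exact (conflict hm (pv 0 2) hmem40 hmem24 (by decide) (by decide) (by decide)).elim
          · exact (conflict hm (pv 0 4) hmem40 hmem39 (by decide) (by decide) (by decide)).elim
          · exact (conflict hm (pv 2 4) hmem40 hmem1 (by decide) (by decide) (by decide)).elim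
        · -- edge s(pv 0 4, pv 1 3)
          obtain ⟨w, hadj41, hmem41, -⟩ := edge_at hm (pv 1 2)
          rcases nbr12 w hadj41 with rfl | rfl | rfl
          · exact (conflict hm (pv 0 3) hmem41 hmem35 (by decide) (by decide) (by decide)).elim
          · exact (conflict hm (pv 0 4) hmem41 hmem39 (by decide) (by decide) (by decide)).elim
          · exact (conflict hm (pv 3 4) hmem41 hmem24 (by decide) (by decide) (by decide)).elim
        · -- edge s(pv 0 4, pv 2 3)
          obtain ⟨w, hadj42, hmem42, -⟩ := edge_at hm (pv 1 2)
          rcases nbr12 w hadj42 with rfl | rfl | rfl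
          · exact (conflict hm (pv 0 3) hmem42 hmem35 (by decide) (by decide) (by decide)).elim
          · exact (conflict hm (pv 0 4) hmem42 hmem39 (by decide) (by decide) (by decide)).elim
          · exact (conflict hm (pv 3 4) hmem42 hmem24 (by decide) (by decide) (by decide)).elim
      · exact (conflict hm (pv 2 4) hmem35 hmem1 (by decide) (by decide) (by decide)).elim
  · -- edge s(pv 0 1, pv 3 4)
    obtain ⟨w, hadj43, hmem43, -⟩ := edge_at hm (pv 0 2)
    rcases nbr02 w hadj43 with rfl | rfl | rfl
    · -- edge s(pv 0 2, pv 1 3)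
      obtain ⟨w, hadj44, hmem44, -⟩ := edge_at hm (pv 0 3)
      rcases nbr03 w hadj44 with rfl | rfl | rfl
      · -- edge s(pv 0 3, pv 1 2)
        obtain ⟨w, hadj45, hmem45, -⟩ := edge_at hm (pv 0 4)
        rcases nbr04 w hadj45 with rfl | rfl | rfl
        · exact (conflict hm (pv 1 2) hmem45 hmem44 (by decide) (by decide) (by decide)).elim
        · exact (conflict hm (pv 1 3) hmem45 hmem43 (by decide) (by decide) (by decide)).elim
        · -- edge s(pv 0 4, pv 2 3)
          obtain ⟨w, hadj46, hmem46, -⟩ := edge_at hm (pv 1 4)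
          rcases nbr14 w hadj46 with rfl | rfl | rfl
          · exact (conflict hm (pv 0 2) hmem46 hmem43 (by decide) (by decide) (by decide)).elim
          · exact (conflict hm (pv 0 3) hmem46 hmem44 (by decide) (by decide) (by decide)).elim
          · exact (conflict hm (pv 2 3) hmem46 hmem45 (by decide) (by decide) (by decide)).elim
      · -- edge s(pv 0 3, pv 1 4)
        obtain ⟨w, hadj47, hmem47, -⟩ := edge_at hm (pv 0 4)
        rcases nbr04 w hadj47 with rfl | rfl | rfl
        · -- edge s(pv 0 4, pv 1 2)
          obtain ⟨w, hadj48, hmem48, -⟩ := edge_at hm (pv 2 3)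
          rcases nbr23 w hadj48 with rfl | rfl | rfl
          · exact (conflict hm (pv 0 1) hmem48 hmem1 (by decide) (by decide) (by decide)).elim
          · exact (conflict hm (pv 0 4) hmem48 hmem47 (by decide) (by decide) (by decide)).elim
          · exact (conflict hm (pv 1 4) hmem48 hmem44 (by decide) (by decide) (by decide)).elim
        · exact (conflict hm (pv 1 3) hmem47 hmem43 (by decide) (by decide) (by decide)).elim
        · -- edge s(pv 0 4, pv 2 3)
          obtain ⟨w, hadj49, hmem49, -⟩ := edge_at hm (pv 1 2)
          rcases nbr12 w hadj49 with rfl | rfl | rfl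
          · exact (conflict hm (pv 0 3) hmem49 hmem44 (by decide) (by decide) (by decide)).elim
          · exact (conflict hm (pv 0 4) hmem49 hmem47 (by decide) (by decide) (by decide)).elim
          · exact (conflict hm (pv 3 4) hmem49 hmem1 (by decide) (by decide) (by decide)).elim
      · -- edge s(pv 0 3, pv 2 4)
        obtain ⟨w, hadj50, hmem50, -⟩ := edge_at hm (pv 0 4)
        rcases nbr04 w hadj50 with rfl | rfl | rfl
        · -- edge s(pv 0 4, pv 1 2)
          obtain ⟨w, hadj51, hmem51, -⟩ := edge_at hm (pv 1 4)
          rcases nbr14 w hadj51 with rfl | rfl | rfl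
          · exact (conflict hm (pv 0 2) hmem51 hmem43 (by decide) (by decide) (by decide)).elim
          · exact (conflict hm (pv 0 3) hmem51 hmem44 (by decide) (by decide) (by decide)).elim
          · -- edge s(pv 1 4, pv 2 3)
            -- leaf PM5
            have hsub : ∀ x ∈ PM5, x ∈ m := by
              intro x hx
              simp only [PM5, Finset.mem_insert, Finset.mem_singleton] at hx
              rcases hx with rfl|rfl|rfl|rfl|rfl
              exacts [hmem1, hmem43, hmem44, hmem50, hmem51]
            have hcov : ∀ a : PetersenV, ∃ e' ∈ PM5, a ∈ e' := by decide
            have hsup : m ⊆ PM5 := by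
              intro e
              induction e with
              | _ a b =>
                intro he
                obtain ⟨e', he', hae'⟩ := hcov a
                obtain ⟨g, -, hu⟩ := hm.2 a
                have q1 := hu _ ⟨he, Sym2.mem_mk_left a b⟩
                have q2 := hu _ ⟨hsub e' he', hae'⟩
                rw [q1.trans q2.symm]; exact he'
            have : m = PM5 := Finset.Subset.antisymm hsup (fun x hx => hsub x hx)
            rw [this, mem_pms6_iff]; tauto
        · exact (conflict hm (pv 1 3) hmem50 hmem43 (by decide) (by decide) (by decide)).elim
        · -- edge s(pv 0 4, pv 2 3)
          obtain ⟨w, hadj52, hmem52, -⟩ := edge_at hm (pv 1 2)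
          rcases nbr12 w hadj52 with rfl | rfl | rfl
          · exact (conflict hm (pv 0 3) hmem52 hmem44 (by decide) (by decide) (by decide)).elim
          · exact (conflict hm (pv 0 4) hmem52 hmem50 (by decide) (by decide) (by decide)).elim
          · exact (conflict hm (pv 3 4) hmem52 hmem1 (by decide) (by decide) (by decide)).elim
    · -- edge s(pv 0 2, pv 1 4)
      obtain ⟨w, hadj53, hmem53, -⟩ := edge_at hm (pv 0 3)
      rcases nbr03 w hadj53 with rfl | rfl | rfl
      · -- edge s(pv 0 3, pv 1 2)
        obtain ⟨w, hadj54, hmem54, -⟩ := edge_at hm (pv 0 4)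
        rcases nbr04 w hadj54 with rfl | rfl | rfl
        · exact (conflict hm (pv 1 2) hmem54 hmem53 (by decide) (by decide) (by decide)).elim
        · -- edge s(pv 0 4, pv 1 3)
          obtain ⟨w, hadj55, hmem55, -⟩ := edge_at hm (pv 2 3)
          rcases nbr23 w hadj55 with rfl | rfl | rfl
          · exact (conflict hm (pv 0 1) hmem55 hmem1 (by decide) (by decide) (by decide)).elim
          · exact (conflict hm (pv 0 4) hmem55 hmem54 (by decide) (by decide) (by decide)).elim
          · exact (conflict hm (pv 1 4) hmem55 hmem43 (by decide) (by decide) (by decide)).elim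
        · -- edge s(pv 0 4, pv 2 3)
          obtain ⟨w, hadj56, hmem56, -⟩ := edge_at hm (pv 1 3)
          rcases nbr13 w hadj56 with rfl | rfl | rfl
          · exact (conflict hm (pv 0 2) hmem56 hmem43 (by decide) (by decide) (by decide)).elim
          · exact (conflict hm (pv 0 4) hmem56 hmem54 (by decide) (by decide) (by decide)).elim
          · -- edge s(pv 1 3, pv 2 4)
            -- leaf PM6
            have hsub : ∀ x ∈ PM6, x ∈ m := by
              intro x hx
              simp only [PM6, Finset.mem_insert, Finset.mem_singleton] at hx
              rcases hx with rfl|rfl|rfl|rfl|rfl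
              exacts [hmem1, hmem43, hmem53, hmem54, hmem56]
            have hcov : ∀ a : PetersenV, ∃ e' ∈ PM6, a ∈ e' := by decide
            have hsup : m ⊆ PM6 := by
              intro e
              induction e with
              | _ a b =>
                intro he
                obtain ⟨e', he', hae'⟩ := hcov a
                obtain ⟨g, -, hu⟩ := hm.2 a
                have q1 := hu _ ⟨he, Sym2.mem_mk_left a b⟩
                have q2 := hu _ ⟨hsub e' he', hae'⟩
                rw [q1.trans q2.symm]; exact he'
            have : m = PM6 := Finset.Subset.antisymm hsup (fun x hx => hsub x hx)
            rw [this, mem_pms6_iff]; tauto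
      · exact (conflict hm (pv 1 4) hmem53 hmem43 (by decide) (by decide) (by decide)).elim
      · -- edge s(pv 0 3, pv 2 4)
        obtain ⟨w, hadj57, hmem57, -⟩ := edge_at hm (pv 0 4)
        rcases nbr04 w hadj57 with rfl | rfl | rfl
        · -- edge s(pv 0 4, pv 1 2)
          obtain ⟨w, hadj58, hmem58, -⟩ := edge_at hm (pv 1 3)
          rcases nbr13 w hadj58 with rfl | rfl | rfl
          · exact (conflict hm (pv 0 2) hmem58 hmem43 (by decide) (by decide) (by decide)).elim
          · exact (conflict hm (pv 0 4) hmem58 hmem57 (by decide) (by decide) (by decide)).elim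
          · exact (conflict hm (pv 2 4) hmem58 hmem53 (by decide) (by decide) (by decide)).elim
        · -- edge s(pv 0 4, pv 1 3)
          obtain ⟨w, hadj59, hmem59, -⟩ := edge_at hm (pv 1 2)
          rcases nbr12 w hadj59 with rfl | rfl | rfl
          · exact (conflict hm (pv 0 3) hmem59 hmem53 (by decide) (by decide) (by decide)).elim
          · exact (conflict hm (pv 0 4) hmem59 hmem57 (by decide) (by decide) (by decide)).elim
          · exact (conflict hm (pv 3 4) hmem59 hmem1 (by decide) (by decide) (by decide)).elim
        · -- edge s(pv 0 4, pv 2 3)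
          obtain ⟨w, hadj60, hmem60, -⟩ := edge_at hm (pv 1 2)
          rcases nbr12 w hadj60 with rfl | rfl | rfl
          · exact (conflict hm (pv 0 3) hmem60 hmem53 (by decide) (by decide) (by decide)).elim
          · exact (conflict hm (pv 0 4) hmem60 hmem57 (by decide) (by decide) (by decide)).elim
          · exact (conflict hm (pv 3 4) hmem60 hmem1 (by decide) (by decide) (by decide)).elim
    · exact (conflict hm (pv 3 4) hmem43 hmem1 (by decide) (by decide) (by decide)).elim
set_option linter.unusedSectionVars false
section Helpers
variable {α : Type*} [DecidableEq α]

lemma card_filter_le_count_sum (S : Multiset (Multiset α)) (e : α) :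
    (S.filter (fun N => e ∈ N)).card ≤ S.sum.count e := by
  induction S using Multiset.induction_on with
  | empty => simp
  | cons N S ih =>
    rw [Multiset.filter_cons, Multiset.sum_cons, Multiset.count_add, Multiset.card_add]
    by_cases h : e ∈ N
    · have h1 : 1 ≤ N.count e := Multiset.one_le_count_iff_mem.mpr h
      simp only [h, if_pos]
      simp only [Multiset.card_singleton]
      omega
    · simp only [h, if_neg, not_false_iff]
      simp only [Multiset.card_zero]
      omega

lemma card_filter_add_card_filter_le (S : Multiset α) (p q r : α → Prop)
    [DecidablePred p] [DecidablePred q] [DecidablePred r]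
    (hpq : ∀ a ∈ S, p a → q a → False) (hp : ∀ a ∈ S, p a → r a) (hq : ∀ a ∈ S, q a → r a) :
    (S.filter p).card + (S.filter q).card ≤ (S.filter r).card := by
  induction S using Multiset.induction_on with
  | empty => simp
  | cons x S ih =>
    have hx : x ∈ x ::ₘ S := Multiset.mem_cons_self x S
    have ih' := ih (fun a ha => hpq a (Multiset.mem_cons_of_mem ha))
      (fun a ha => hp a (Multiset.mem_cons_of_mem ha))
      (fun a ha => hq a (Multiset.mem_cons_of_mem ha))
    rw [Multiset.filter_cons, Multiset.filter_cons, Multiset.filter_cons,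
      Multiset.card_add, Multiset.card_add, Multiset.card_add]
    by_cases hpx : p x
    · have hrx : r x := hp x hx hpx
      have hqx : ¬ q x := fun hqx => hpq x hx hpx hqx
      simp only [hpx, hqx, hrx, if_pos, if_neg, not_false_iff, Multiset.card_singleton,
        Multiset.card_zero]
      omega
    · by_cases hqx : q x
      · have hrx : r x := hq x hx hqx
        simp only [hpx, hqx, hrx, if_pos, if_neg, not_false_iff, Multiset.card_singleton,
          Multiset.card_zero]
        omega
      · simp only [hpx, hqx, if_neg, not_false_iff, Multiset.card_zero]
        split_ifs <;> simp <;> omega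

lemma mem_of_mem_map_sum {β : Type*} {S : Multiset β} {f : β → Multiset α} {e : α}
    (h : e ∈ (S.map f).sum) : ∃ X ∈ S, e ∈ f X := by
  induction S using Multiset.induction_on with
  | empty => simp at h
  | cons x S ih =>
    rw [Multiset.map_cons, Multiset.sum_cons, Multiset.mem_add] at h
    rcases h with h | h
    · exact ⟨x, Multiset.mem_cons_self x S, h⟩
    · obtain ⟨X, hX, he⟩ := ih h
      exact ⟨X, Multiset.mem_cons_of_mem hX, he⟩

end Helpers

lemma count_sum_le (𝓜 : Multiset (Finset (Sym2 PetersenV))) (e : Sym2 PetersenV)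
    (M M' : Finset (Sym2 PetersenV)) (hMM' : M ≠ M')
    (h : ∀ X ∈ 𝓜, e ∈ X → X = M ∨ X = M') :
    ((𝓜.map Finset.val).sum).count e ≤ 𝓜.count M + 𝓜.count M' := by
  induction 𝓜 using Multiset.induction_on with
  | empty => simp
  | cons X S ih =>
    have ih' := ih (fun Y hY => h Y (Multiset.mem_cons_of_mem hY))
    rw [Multiset.map_cons, Multiset.sum_cons, Multiset.count_add,
      Multiset.count_cons, Multiset.count_cons]
    by_cases he : e ∈ X
    · have h1 : X.val.count e = 1 :=
        Multiset.count_eq_one_of_mem X.nodup he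
      rcases h X (Multiset.mem_cons_self X S) he with hXM | hXM
      · rw [h1, if_pos hXM.symm]; omega
      · rw [h1, if_pos hXM.symm]; omega
    · have h0 : X.val.count e = 0 := Multiset.count_eq_zero.mpr he
      rw [h0]
      split_ifs <;> omega

lemma isPM_toFinset (E : Multiset (Sym2 PetersenV))
    (hEedge : ∀ e ∈ E, e ∈ petersen.edgeSet)
    (N : Multiset (Sym2 PetersenV)) (hN : IsPMOf E N) : IsPM N.toFinset := by
  constructor
  · intro e he
    rw [Finset.mem_coe, Multiset.mem_toFinset] at he
    exact hEedge e (Multiset.mem_of_le hN.1 he)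
  · intro v
    obtain ⟨a, ha⟩ := Multiset.card_eq_one.mp (hN.2 v)
    have ha' : a ∈ N.filter (fun e => v ∈ e) := by rw [ha]; exact Multiset.mem_singleton_self a
    rw [Multiset.mem_filter] at ha'
    refine ⟨a, ⟨Multiset.mem_toFinset.mpr ha'.1, ha'.2⟩, ?_⟩
    rintro e ⟨heN, hve⟩
    have : e ∈ N.filter (fun e => v ∈ e) :=
      Multiset.mem_filter.mpr ⟨Multiset.mem_toFinset.mp heN, hve⟩
    rw [ha, Multiset.mem_singleton] at this
    exact this

lemma nodup_of_isPMOf (E : Multiset (Sym2 PetersenV))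
    (N : Multiset (Sym2 PetersenV)) (hN : IsPMOf E N) : N.Nodup := by
  rw [Multiset.nodup_iff_count_le_one]
  intro e
  by_contra hc
  push_neg at hc
  have he : e ∈ N := by
    rw [← Multiset.one_le_count_iff_mem]; omega
  obtain ⟨a, ha⟩ : ∃ a, a ∈ e := ⟨e.out.1, Sym2.out_fst_mem e⟩
  have h1 : (N.filter (fun e => a ∈ e)).count e = N.count e := by
    rw [Multiset.count_filter, if_pos ha]
  have h2 := Multiset.count_le_card e (N.filter (fun e => a ∈ e))
  rw [hN.2 a] at h2
  omega
lemma special {M M' : Finset (Sym2 PetersenV)} (hM : M ∈ pms6) (hM' : M' ∈ pms6)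
    (hne : M ≠ M') : ∃ e, e ∈ petersen.edgeFinset ∧ e ∈ M ∧ e ∈ M' ∧
      ∀ M'' ∈ pms6, e ∈ M'' → M'' = M ∨ M'' = M' := by
  rw [mem_pms6_iff] at hM hM'
  rcases hM with rfl|rfl|rfl|rfl|rfl|rfl
  · rcases hM' with rfl|rfl|rfl|rfl|rfl|rfl
    · exact absurd rfl hne
    · refine ⟨s(pv 0 1, pv 2 3), by decide, by decide, by decide, fun M'' hm'' he'' => ?_⟩
      rw [mem_pms6_iff] at hm''
      rcases hm'' with rfl|rfl|rfl|rfl|rfl|rfl <;> revert he'' <;> decide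
    · refine ⟨s(pv 1 2, pv 3 4), by decide, by decide, by decide, fun M'' hm'' he'' => ?_⟩
      rw [mem_pms6_iff] at hm''
      rcases hm'' with rfl|rfl|rfl|rfl|rfl|rfl <;> revert he'' <;> decide
    · refine ⟨s(pv 0 4, pv 1 3), by decide, by decide, by decide, fun M'' hm'' he'' => ?_⟩
      rw [mem_pms6_iff] at hm''
      rcases hm'' with rfl|rfl|rfl|rfl|rfl|rfl <;> revert he'' <;> decide
    · refine ⟨s(pv 0 3, pv 2 4), by decide, by decide, by decide, fun M'' hm'' he'' => ?_⟩
      rw [mem_pms6_iff] at hm''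
      rcases hm'' with rfl|rfl|rfl|rfl|rfl|rfl <;> revert he'' <;> decide
    · refine ⟨s(pv 0 2, pv 1 4), by decide, by decide, by decide, fun M'' hm'' he'' => ?_⟩
      rw [mem_pms6_iff] at hm''
      rcases hm'' with rfl|rfl|rfl|rfl|rfl|rfl <;> revert he'' <;> decide
  · rcases hM' with rfl|rfl|rfl|rfl|rfl|rfl
    · refine ⟨s(pv 0 1, pv 2 3), by decide, by decide, by decide, fun M'' hm'' he'' => ?_⟩
      rw [mem_pms6_iff] at hm''
      rcases hm'' with rfl|rfl|rfl|rfl|rfl|rfl <;> revert he'' <;> decide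
    · exact absurd rfl hne
    · refine ⟨s(pv 0 3, pv 1 4), by decide, by decide, by decide, fun M'' hm'' he'' => ?_⟩
      rw [mem_pms6_iff] at hm''
      rcases hm'' with rfl|rfl|rfl|rfl|rfl|rfl <;> revert he'' <;> decide
    · refine ⟨s(pv 0 2, pv 3 4), by decide, by decide, by decide, fun M'' hm'' he'' => ?_⟩
      rw [mem_pms6_iff] at hm''
      rcases hm'' with rfl|rfl|rfl|rfl|rfl|rfl <;> revert he'' <;> decide
    · refine ⟨s(pv 0 4, pv 1 2), by decide, by decide, by decide, fun M'' hm'' he'' => ?_⟩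
      rw [mem_pms6_iff] at hm''
      rcases hm'' with rfl|rfl|rfl|rfl|rfl|rfl <;> revert he'' <;> decide
    · refine ⟨s(pv 1 3, pv 2 4), by decide, by decide, by decide, fun M'' hm'' he'' => ?_⟩
      rw [mem_pms6_iff] at hm''
      rcases hm'' with rfl|rfl|rfl|rfl|rfl|rfl <;> revert he'' <;> decide
  · rcases hM' with rfl|rfl|rfl|rfl|rfl|rfl
    · refine ⟨s(pv 1 2, pv 3 4), by decide, by decide, by decide, fun M'' hm'' he'' => ?_⟩
      rw [mem_pms6_iff] at hm''
      rcases hm'' with rfl|rfl|rfl|rfl|rfl|rfl <;> revert he'' <;> decide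
    · refine ⟨s(pv 0 3, pv 1 4), by decide, by decide, by decide, fun M'' hm'' he'' => ?_⟩
      rw [mem_pms6_iff] at hm''
      rcases hm'' with rfl|rfl|rfl|rfl|rfl|rfl <;> revert he'' <;> decide
    · exact absurd rfl hne
    · refine ⟨s(pv 0 1, pv 2 4), by decide, by decide, by decide, fun M'' hm'' he'' => ?_⟩
      rw [mem_pms6_iff] at hm''
      rcases hm'' with rfl|rfl|rfl|rfl|rfl|rfl <;> revert he'' <;> decide
    · refine ⟨s(pv 0 2, pv 1 3), by decide, by decide, by decide, fun M'' hm'' he'' => ?_⟩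
      rw [mem_pms6_iff] at hm''
      rcases hm'' with rfl|rfl|rfl|rfl|rfl|rfl <;> revert he'' <;> decide
    · refine ⟨s(pv 0 4, pv 2 3), by decide, by decide, by decide, fun M'' hm'' he'' => ?_⟩
      rw [mem_pms6_iff] at hm''
      rcases hm'' with rfl|rfl|rfl|rfl|rfl|rfl <;> revert he'' <;> decide
  · rcases hM' with rfl|rfl|rfl|rfl|rfl|rfl
    · refine ⟨s(pv 0 4, pv 1 3), by decide, by decide, by decide, fun M'' hm'' he'' => ?_⟩
      rw [mem_pms6_iff] at hm''
      rcases hm'' with rfl|rfl|rfl|rfl|rfl|rfl <;> revert he'' <;> decide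
    · refine ⟨s(pv 0 2, pv 3 4), by decide, by decide, by decide, fun M'' hm'' he'' => ?_⟩
      rw [mem_pms6_iff] at hm''
      rcases hm'' with rfl|rfl|rfl|rfl|rfl|rfl <;> revert he'' <;> decide
    · refine ⟨s(pv 0 1, pv 2 4), by decide, by decide, by decide, fun M'' hm'' he'' => ?_⟩
      rw [mem_pms6_iff] at hm''
      rcases hm'' with rfl|rfl|rfl|rfl|rfl|rfl <;> revert he'' <;> decide
    · exact absurd rfl hne
    · refine ⟨s(pv 1 4, pv 2 3), by decide, by decide, by decide, fun M'' hm'' he'' => ?_⟩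
      rw [mem_pms6_iff] at hm''
      rcases hm'' with rfl|rfl|rfl|rfl|rfl|rfl <;> revert he'' <;> decide
    · refine ⟨s(pv 0 3, pv 1 2), by decide, by decide, by decide, fun M'' hm'' he'' => ?_⟩
      rw [mem_pms6_iff] at hm''
      rcases hm'' with rfl|rfl|rfl|rfl|rfl|rfl <;> revert he'' <;> decide
  · rcases hM' with rfl|rfl|rfl|rfl|rfl|rfl
    · refine ⟨s(pv 0 3, pv 2 4), by decide, by decide, by decide, fun M'' hm'' he'' => ?_⟩
      rw [mem_pms6_iff] at hm''
      rcases hm'' with rfl|rfl|rfl|rfl|rfl|rfl <;> revert he'' <;> decide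
    · refine ⟨s(pv 0 4, pv 1 2), by decide, by decide, by decide, fun M'' hm'' he'' => ?_⟩
      rw [mem_pms6_iff] at hm''
      rcases hm'' with rfl|rfl|rfl|rfl|rfl|rfl <;> revert he'' <;> decide
    · refine ⟨s(pv 0 2, pv 1 3), by decide, by decide, by decide, fun M'' hm'' he'' => ?_⟩
      rw [mem_pms6_iff] at hm''
      rcases hm'' with rfl|rfl|rfl|rfl|rfl|rfl <;> revert he'' <;> decide
    · refine ⟨s(pv 1 4, pv 2 3), by decide, by decide, by decide, fun M'' hm'' he'' => ?_⟩
      rw [mem_pms6_iff] at hm''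
      rcases hm'' with rfl|rfl|rfl|rfl|rfl|rfl <;> revert he'' <;> decide
    · exact absurd rfl hne
    · refine ⟨s(pv 0 1, pv 3 4), by decide, by decide, by decide, fun M'' hm'' he'' => ?_⟩
      rw [mem_pms6_iff] at hm''
      rcases hm'' with rfl|rfl|rfl|rfl|rfl|rfl <;> revert he'' <;> decide
  · rcases hM' with rfl|rfl|rfl|rfl|rfl|rfl
    · refine ⟨s(pv 0 2, pv 1 4), by decide, by decide, by decide, fun M'' hm'' he'' => ?_⟩
      rw [mem_pms6_iff] at hm''
      rcases hm'' with rfl|rfl|rfl|rfl|rfl|rfl <;> revert he'' <;> decide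
    · refine ⟨s(pv 1 3, pv 2 4), by decide, by decide, by decide, fun M'' hm'' he'' => ?_⟩
      rw [mem_pms6_iff] at hm''
      rcases hm'' with rfl|rfl|rfl|rfl|rfl|rfl <;> revert he'' <;> decide
    · refine ⟨s(pv 0 4, pv 2 3), by decide, by decide, by decide, fun M'' hm'' he'' => ?_⟩
      rw [mem_pms6_iff] at hm''
      rcases hm'' with rfl|rfl|rfl|rfl|rfl|rfl <;> revert he'' <;> decide
    · refine ⟨s(pv 0 3, pv 1 2), by decide, by decide, by decide, fun M'' hm'' he'' => ?_⟩
      rw [mem_pms6_iff] at hm''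
      rcases hm'' with rfl|rfl|rfl|rfl|rfl|rfl <;> revert he'' <;> decide
    · refine ⟨s(pv 0 1, pv 3 4), by decide, by decide, by decide, fun M'' hm'' he'' => ?_⟩
      rw [mem_pms6_iff] at hm''
      rcases hm'' with rfl|rfl|rfl|rfl|rfl|rfl <;> revert he'' <;> decide
    · exact absurd rfl hne

/-- Let `𝓜` be a multiset of `k` perfect matchings of the Petersen graph and
`P^𝓜` the multigraph obtained by adding, for each matching in `𝓜`, a parallel
copy of each of its edges. If `𝓜'` is a multiset of `k+1` pairwise
edge-disjoint perfect matchings of `P^𝓜`, then (projecting each member of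
`𝓜'` to a perfect matching of `P`) `𝓜` is a sub-multiset of `𝓜'`. -/
theorem petersen_plus_matchings_sub_multiset
    (k : ℕ) (𝓜 : Multiset (Finset (Sym2 PetersenV)))
    (h𝓜 : ∀ M ∈ 𝓜, IsPM M) (hk : 𝓜.card = k)
    (E : Multiset (Sym2 PetersenV))
    (hE : E = petersen.edgeFinset.val + (𝓜.map Finset.val).sum)
    (𝓜' : Multiset (Multiset (Sym2 PetersenV)))
    (h𝓜' : ∀ N ∈ 𝓜', IsPMOf E N) (hk' : 𝓜'.card = k + 1)
    (hdisj : 𝓜'.sum ≤ E) :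
    𝓜 ≤ 𝓜'.map Multiset.toFinset := by
  have hEedge : ∀ e ∈ E, e ∈ petersen.edgeSet := by
    rw [hE]; intro e he
    rcases Multiset.mem_add.mp he with h | h
    · exact SimpleGraph.mem_edgeFinset.mp h
    · obtain ⟨X, hX, heX⟩ := mem_of_mem_map_sum h
      exact (h𝓜 X hX).1 heX
  have hMmem : ∀ X ∈ 𝓜, X ∈ pms6 := fun X hX => classification (h𝓜 X hX)
  have hNpm : ∀ N ∈ 𝓜', N.toFinset ∈ pms6 := fun N hN =>
    classification (isPM_toFinset E hEedge N (h𝓜' N hN))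
  rw [Multiset.le_iff_count]
  intro M
  by_contra hc
  push_neg at hc
  have hAsum : ∑ X ∈ pms6, 𝓜.count X = k := by
    rw [← hk, ← Multiset.toFinset_sum_count_eq 𝓜]
    exact (Finset.sum_subset (fun X hX => hMmem X (Multiset.mem_toFinset.mp hX))
      (fun X _ hX => Multiset.count_eq_zero.mpr
        (fun hmem => hX (Multiset.mem_toFinset.mpr hmem)))).symm
  have hBsum : ∑ X ∈ pms6, (𝓜'.map Multiset.toFinset).count X = k + 1 := by
    have hcard : (𝓜'.map Multiset.toFinset).card = k + 1 := by rw [Multiset.card_map, hk']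
    rw [← hcard, ← Multiset.toFinset_sum_count_eq]
    refine (Finset.sum_subset ?_ ?_).symm
    · intro X hX
      obtain ⟨N, hN, rfl⟩ := Multiset.mem_map.mp (Multiset.mem_toFinset.mp hX)
      exact hNpm N hN
    · intro X _ hX
      exact Multiset.count_eq_zero.mpr (fun hmem => hX (Multiset.mem_toFinset.mpr hmem))
  have hpair : ∀ M₁ ∈ pms6, ∀ M₂ ∈ pms6, M₁ ≠ M₂ →
      (𝓜'.map Multiset.toFinset).count M₁ + (𝓜'.map Multiset.toFinset).count M₂
        ≤ 1 + 𝓜.count M₁ + 𝓜.count M₂ := by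
    intro M₁ h₁ M₂ h₂ hne
    obtain ⟨e, heE, he₁, he₂, huniq⟩ := special h₁ h₂ hne
    have step1 : (𝓜'.map Multiset.toFinset).count M₁ + (𝓜'.map Multiset.toFinset).count M₂
        ≤ (𝓜'.filter (fun N => e ∈ N)).card := by
      rw [Multiset.count_map, Multiset.count_map]
      refine card_filter_add_card_filter_le 𝓜' _ _ _ ?_ ?_ ?_
      · intro N _ hp hq; exact hne (hp.trans hq.symm)
      · intro N _ hp; exact Multiset.mem_toFinset.mp (hp ▸ he₁)
      · intro N _ hq; exact Multiset.mem_toFinset.mp (hq ▸ he₂)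
    have step2 := card_filter_le_count_sum 𝓜' e
    have step3 : 𝓜'.sum.count e ≤ E.count e := Multiset.le_iff_count.mp hdisj e
    have step4 : E.count e = 1 + ((𝓜.map Finset.val).sum).count e := by
      rw [hE, Multiset.count_add]
      congr 1
      exact Multiset.count_eq_one_of_mem petersen.edgeFinset.nodup (Finset.mem_val.mpr heE)
    have step5 : ((𝓜.map Finset.val).sum).count e ≤ 𝓜.count M₁ + 𝓜.count M₂ :=
      count_sum_le 𝓜 e M₁ M₂ hne (fun X hX heX => huniq X (hMmem X hX) heX)
    omega
  have hMpm : M ∈ pms6 := hMmem M (Multiset.count_pos.mp (by omega))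
  have hT : (pms6.erase M).card = 5 := by rw [Finset.card_erase_of_mem hMpm, pms6_card]
  have hsplitA : 𝓜.count M + ∑ X ∈ pms6.erase M, 𝓜.count X = k := by
    rw [← hAsum]; exact Finset.add_sum_erase pms6 (fun X => Multiset.count X 𝓜) hMpm
  have hsplitB : (𝓜'.map Multiset.toFinset).count M
      + ∑ X ∈ pms6.erase M, (𝓜'.map Multiset.toFinset).count X = k + 1 := by
    rw [← hBsum]
    exact Finset.add_sum_erase pms6 (fun X => Multiset.count X (𝓜'.map Multiset.toFinset)) hMpm
  have key : ∀ j ∈ pms6.erase M, (𝓜'.map Multiset.toFinset).count j ≤ 𝓜.count j := by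
    intro j hj
    have hj6 : j ∈ pms6 := Finset.mem_of_mem_erase hj
    have hTj : ((pms6.erase M).erase j).card = 4 := by
      rw [Finset.card_erase_of_mem hj, hT]
    have hsum : ∑ l ∈ (pms6.erase M).erase j,
        ((𝓜'.map Multiset.toFinset).count j + (𝓜'.map Multiset.toFinset).count l)
        ≤ ∑ l ∈ (pms6.erase M).erase j, (1 + 𝓜.count j + 𝓜.count l) := by
      refine Finset.sum_le_sum ?_
      intro l hl
      have hl6 : l ∈ pms6 := Finset.mem_of_mem_erase (Finset.mem_of_mem_erase hl)
      have hlj : l ≠ j := Finset.ne_of_mem_erase hl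
      exact hpair j hj6 l hl6 (fun h => hlj h.symm)
    rw [Finset.sum_add_distrib, Finset.sum_const, hTj, smul_eq_mul] at hsum
    rw [Finset.sum_add_distrib, Finset.sum_const, hTj, smul_eq_mul] at hsum
    have hBe : (𝓜'.map Multiset.toFinset).count j
        + ∑ l ∈ (pms6.erase M).erase j, (𝓜'.map Multiset.toFinset).count l
        = ∑ X ∈ pms6.erase M, (𝓜'.map Multiset.toFinset).count X :=
      Finset.add_sum_erase _ (fun l => Multiset.count l (𝓜'.map Multiset.toFinset)) hj
    have hAe : 𝓜.count j + ∑ l ∈ (pms6.erase M).erase j, 𝓜.count l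
        = ∑ X ∈ pms6.erase M, 𝓜.count X :=
      Finset.add_sum_erase _ (fun l => Multiset.count l 𝓜) hj
    omega
  have hfinal : ∑ X ∈ pms6.erase M, (𝓜'.map Multiset.toFinset).count X
      ≤ ∑ X ∈ pms6.erase M, 𝓜.count X := Finset.sum_le_sum key
  omega
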